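/- Let n = 2m be even and let q be an integer with 0 ≤ q ≤ m. Let c ∈ {0,1}^{n−1} with wt(c) ∈ {m+q−1, m+q}. If wt(c) = m+q−1, then Γ_q^{(B)}(c) = {i ∈ {0,…,n−1} : R(c)_i ≥ 0 and R(c)_i ≠ R(c)_j for all j < i}; if wt(c) = m+q, then Γ_q^{(B)}(c) = {i ∈ {0,…,n−1} : R(c)_i ≤ 0 and R(c)_i ≠ R(c)_j for all j < i}. -/

import Mathlib

/-- The Hamming weight of a binary word `x ∈ {0,1}^N`: the number of ones. -/
def wt {N : ℕ} (x : Fin N → Bool) : ℕ :=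
  (Finset.univ.filter (fun i => x i = true)).card

/-- `Flip x j` complements the first `j` bits of `x`. -/
def Flip {N : ℕ} (x : Fin N → Bool) (j : ℕ) : Fin N → Bool :=
  fun i => if (i : ℕ) < j then !(x i) else x i

/-- The running sum `R(x)`: `R(x)₀ = 0` and `R(x)ᵢ = R(x)_{i−1} ± 1`
according to whether the `i`-th bit is `1` or `0`. -/
def RS {N : ℕ} (x : Fin N → Bool) : ℕ → ℤ
  | 0 => 0
  | i + 1 => RS x i + if h : i < N then (if x ⟨i, h⟩ then 1 else -1) else 0

/-- `j ∈ T_B(x,q)`: `j ∈ {0,…,n−1}` and `wt(Flip(x,j)) ∈ {m+q−1, m+q}`. -/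
def TBmem (m q : ℕ) (x : Fin (2*m-1) → Bool) (j : ℕ) : Prop :=
  j ≤ 2*m - 1 ∧ (wt (Flip x j) = m + q - 1 ∨ wt (Flip x j) = m + q)

/-- `Γ_q^{(B)}(c)`: the set of indices `j` such that the word `x = Flip(c,j)`
satisfies `T_B(x,q) ≠ ∅` and `min T_B(x,q) = j`. -/
def GammaB (m q : ℕ) (c : Fin (2*m-1) → Bool) : Set ℕ :=
  {j | TBmem m q (Flip c j) j ∧ ∀ j', TBmem m q (Flip c j) j' → j ≤ j'}


lemma wt_cast {N : ℕ} (x : Fin N → Bool) :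
    (wt x : ℤ) = ∑ i, (if x i then (1:ℤ) else 0) := by
  rw [wt, Finset.card_filter]
  push_cast
  apply Finset.sum_congr rfl
  intro i _
  by_cases h : x i <;> simp [h]

lemma RS_abs_step {N : ℕ} (c : Fin N → Bool) (i : ℕ) :
    |RS c (i+1) - RS c i| ≤ 1 := by
  show |RS c i + _ - RS c i| ≤ 1
  split
  · split <;> norm_num
  · norm_num

lemma Flip_zero {N : ℕ} (c : Fin N → Bool) : Flip c 0 = c := by
  funext i; simp [Flip]

lemma wt_flip_int {N : ℕ} (c : Fin N → Bool) (j : ℕ) :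
    (wt (Flip c j) : ℤ) = (wt c : ℤ) - RS c j := by
  induction j with
  | zero => rw [Flip_zero]; show _ = _ - 0; ring
  | succ j ih =>
    rw [wt_cast] at ih ⊢
    have hpt : ∀ i : Fin N, (if Flip c (j+1) i then (1:ℤ) else 0)
        = (if Flip c j i then (1:ℤ) else 0)
          + (if (i:ℕ) = j then (if c i then -1 else 1) else 0) := by
      intro i
      by_cases hij : (i:ℕ) = j
      · have h1 : (i:ℕ) < j + 1 := by omega
        have h2 : ¬ ((i:ℕ) < j) := by omega
        simp only [Flip, h1, if_true, h2, if_false, hij, if_true]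
        by_cases h : c i <;> simp [h]
      · have h12 : ((i:ℕ) < j+1) ↔ ((i:ℕ) < j) := by omega
        simp only [Flip, h12, hij, if_false, add_zero]
        congr
    rw [Finset.sum_congr rfl (fun i _ => hpt i), Finset.sum_add_distrib]
    have hRS : RS c (j+1) = RS c j + if h : j < N then (if c ⟨j, h⟩ then 1 else -1) else 0 := rfl
    rw [hRS]
    have hsum : (∑ i : Fin N, (if (i:ℕ) = j then (if c i then (-1:ℤ) else 1) else 0))
        = if h : j < N then (if c ⟨j, h⟩ then -1 else 1) else 0 := by
      split
      · rename_i h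
        rw [Finset.sum_eq_single (⟨j, h⟩ : Fin N)]
        · simp
        · intro b _ hb
          have : (b : ℕ) ≠ j := by
            intro hbj; exact hb (Fin.ext hbj)
          simp [this]
        · intro habs; exact absurd (Finset.mem_univ _) habs
      · rename_i h
        apply Finset.sum_eq_zero
        intro i _
        have : (i:ℕ) ≠ j := by omega
        simp [this]
    rw [hsum]
    have hneg : (if h : j < N then (if c ⟨j, h⟩ then (-1:ℤ) else 1) else 0)
        = -(if h : j < N then (if c ⟨j, h⟩ then (1:ℤ) else -1) else 0) := by
      split
      · split <;> norm_num
      · norm_num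
    rw [hneg, ih]
    ring

lemma RS_flip {N : ℕ} (c : Fin N → Bool) (j : ℕ) :
    ∀ i ≤ j, RS (Flip c j) i = - RS c i := by
  intro i
  induction i with
  | zero => intro _; show (0:ℤ) = -0; ring
  | succ i ih =>
    intro h
    have hij : i < j := by omega
    show RS (Flip c j) i + _ = -(RS c i + _)
    rw [ih (by omega)]
    split
    · rename_i hN
      have : Flip c j ⟨i, hN⟩ = !(c ⟨i, hN⟩) := by simp [Flip, hij]
      rw [this]
      by_cases hcb : c ⟨i, hN⟩ <;> simp [hcb] <;> ring
    · ring

lemma Flip_Flip {N : ℕ} (c : Fin N → Bool) (j : ℕ) : Flip (Flip c j) j = c := by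
  funext i
  simp only [Flip]
  split <;> simp

lemma wt_flip_flip {N : ℕ} (c : Fin N → Bool) (j j' : ℕ) (h : j' ≤ j) :
    (wt (Flip (Flip c j) j') : ℤ) = (wt c : ℤ) - RS c j + RS c j' := by
  rw [wt_flip_int, wt_flip_int, RS_flip c j j' h]
  ring

lemma ivt (f : ℕ → ℤ) (hstep : ∀ i, f (i+1) ≤ f i + 1) :
    ∀ a b v, a ≤ b → f a ≤ v → v ≤ f b → ∃ t, a ≤ t ∧ t ≤ b ∧ f t = v := by
  intro a b
  induction b with
  | zero =>
    intro v hab h1 h2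
    have ha : a = 0 := Nat.le_zero.mp hab
    subst ha
    exact ⟨0, le_refl _, le_refl _, le_antisymm h1 h2⟩
  | succ b ih =>
    intro v hab h1 h2
    rcases Nat.eq_or_lt_of_le hab with h | h
    · exact ⟨a, le_refl _, hab, by rw [← h] at h2; exact le_antisymm h1 h2⟩
    · by_cases hv : v ≤ f b
      · obtain ⟨t, h3, h4, h5⟩ := ih v (by omega) h1 hv
        exact ⟨t, h3, by omega, h5⟩
      · exact ⟨b+1, hab, le_refl _, by have := hstep b; omega⟩

lemma claim1 (f : ℕ → ℤ) (h0 : f 0 = 0) (hstep : ∀ i, |f (i+1) - f i| ≤ 1) (j : ℕ) :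
    (∀ t < j, f t ≠ f j ∧ f t ≠ f j + 1) ↔ (0 ≤ f j ∧ ∀ t < j, f t ≠ f j) := by
  have hup : ∀ i, f (i+1) ≤ f i + 1 := fun i => by have := abs_le.mp (hstep i); omega
  have hdown : ∀ i, (fun k => -f k) (i+1) ≤ (fun k => -f k) i + 1 := fun i => by
    have := abs_le.mp (hstep i); simp; omega
  constructor
  · intro h
    refine ⟨?_, fun t ht => (h t ht).1⟩
    by_contra hneg
    push_neg at hneg
    obtain ⟨t, _, htj, hft⟩ := ivt (fun k => -f k) hdown 0 j (-(f j + 1)) (Nat.zero_le j)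
      (by simp [h0]; omega) (by simp)
    simp only [neg_inj] at hft
    have htlt : t < j := by
      rcases Nat.eq_or_lt_of_le htj with h' | h'
      · exfalso; rw [h'] at hft; omega
      · exact h'
    exact (h t htlt).2 hft
  · rintro ⟨h0j, hne⟩ t ht
    refine ⟨hne t ht, fun hft => ?_⟩
    obtain ⟨s, _, hst, hfs⟩ := ivt f hup 0 t (f j) (Nat.zero_le t) (by omega) (by omega)
    exact hne s (by omega) hfs

lemma claim2 (f : ℕ → ℤ) (h0 : f 0 = 0) (hstep : ∀ i, |f (i+1) - f i| ≤ 1) (j : ℕ) :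
    (∀ t < j, f t ≠ f j ∧ f t ≠ f j - 1) ↔ (f j ≤ 0 ∧ ∀ t < j, f t ≠ f j) := by
  have := claim1 (fun k => -f k) (by simp [h0]) (fun i => by
    have := abs_le.mp (hstep i); simp [abs_le]; omega) j
  constructor
  · intro h
    have h' := this.mp (fun t ht => by have := h t ht; omega)
    exact ⟨by omega, fun t ht => by have := h'.2 t ht; omega⟩
  · intro h
    have h' := this.mpr ⟨by omega, fun t ht => by have := h.2 t ht; omega⟩
    intro t ht
    have := h' t ht
    omega

/-- running-sum characterization of `Γ_q^{(B)}(c)`. -/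
theorem stmt9 (m q : ℕ) (hq : q ≤ m) (c : Fin (2*m-1) → Bool)
    (hc : wt c = m + q - 1 ∨ wt c = m + q) :
    (wt c = m + q - 1 →
      ∀ i, i ∈ GammaB m q c ↔
        (i ≤ 2*m - 1 ∧ 0 ≤ RS c i ∧ ∀ j < i, RS c i ≠ RS c j)) ∧
    (wt c = m + q →
      ∀ i, i ∈ GammaB m q c ↔
        (i ≤ 2*m - 1 ∧ RS c i ≤ 0 ∧ ∀ j < i, RS c i ≠ RS c j)) := by
  have hstep := RS_abs_step c
  have h0 : RS c 0 = 0 := rfl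
  constructor
  · intro hw i
    constructor
    · rintro ⟨⟨hiN, _⟩, hmin⟩
      have hexcl : ∀ t < i, RS c t ≠ RS c i ∧ RS c t ≠ RS c i + 1 := by
        intro t ht
        have hcast := wt_flip_flip c i t (le_of_lt ht)
        constructor <;> intro heq <;>
          exact absurd (hmin t ⟨by omega, by omega⟩) (by omega)
      have h' := (claim1 (RS c) h0 hstep i).mp hexcl
      exact ⟨hiN, h'.1, fun j hj => Ne.symm (h'.2 j hj)⟩
    · rintro ⟨hiN, hpos, hne⟩
      have hexcl := (claim1 (RS c) h0 hstep i).mpr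
        ⟨hpos, fun t ht => Ne.symm (hne t ht)⟩
      refine ⟨⟨hiN, ?_⟩, ?_⟩
      · rw [Flip_Flip]; exact hc
      · rintro j' ⟨hj'N, hwt⟩
        by_contra hlt
        push_neg at hlt
        have hcast := wt_flip_flip c i j' (le_of_lt hlt)
        have h' := hexcl j' hlt
        omega
  · intro hw i
    constructor
    · rintro ⟨⟨hiN, _⟩, hmin⟩
      have hexcl : ∀ t < i, RS c t ≠ RS c i ∧ RS c t ≠ RS c i - 1 := by
        intro t ht
        have hcast := wt_flip_flip c i t (le_of_lt ht)
        constructor <;> intro heq <;>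
          exact absurd (hmin t ⟨by omega, by omega⟩) (by omega)
      have h' := (claim2 (RS c) h0 hstep i).mp hexcl
      exact ⟨hiN, h'.1, fun j hj => Ne.symm (h'.2 j hj)⟩
    · rintro ⟨hiN, hpos, hne⟩
      have hexcl := (claim2 (RS c) h0 hstep i).mpr
        ⟨hpos, fun t ht => Ne.symm (hne t ht)⟩
      refine ⟨⟨hiN, ?_⟩, ?_⟩
      · rw [Flip_Flip]; exact hc
      · rintro j' ⟨hj'N, hwt⟩
        by_contra hlt
        push_neg at hlt
        have hcast := wt_flip_flip c i j' (le_of_lt hlt)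
        have h' := hexcl j' hlt
        omega
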